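/- Let k be a field with more than two elements and n ≥ 1. Let T ≤ GL_n(k) be the subgroup of invertible diagonal matrices. Then the normalizer N of T in GL_n(k) is exactly the group of invertible monomial matrices (matrices with exactly one nonzero entry in each row and each column), and the quotient group N/T is isomorphic to the symmetric group S_n. (Identification of the Weyl group of GL_n.) -/

import Mathlib

/-- The subgroup `T` of `GL_n(k)` consisting of invertible diagonal matrices. -/
def diagTorus (k : Type*) [Field k] (n : ℕ) : Subgroup (GL (Fin n) k) where
  carrier := {g | ∀ i j : Fin n, i ≠ j → (g : Matrix (Fin n) (Fin n) k) i j = 0}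
  one_mem' := by
    intro i j hij
    show (↑(1 : GL (Fin n) k) : Matrix (Fin n) (Fin n) k) i j = 0
    rw [Units.val_one, Matrix.one_apply_ne hij]
  mul_mem' := by
    intro a b ha hb i j hij
    show (↑(a * b) : Matrix (Fin n) (Fin n) k) i j = 0
    rw [Units.val_mul, Matrix.mul_apply]
    refine Finset.sum_eq_zero fun c _ => ?_
    by_cases hic : i = c
    · subst hic; rw [hb i j hij, mul_zero]
    · rw [ha i c hic, zero_mul]
  inv_mem' := by
    intro g hg i j hij
    have hdiag : (g : Matrix (Fin n) (Fin n) k) =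
        Matrix.diagonal (fun a => (g : Matrix (Fin n) (Fin n) k) a a) := by
      ext a b
      by_cases hab : a = b
      · subst hab; simp
      · rw [Matrix.diagonal_apply_ne _ hab, hg a b hab]
    show (↑(g⁻¹) : Matrix (Fin n) (Fin n) k) i j = 0
    rw [Matrix.coe_units_inv, hdiag, Matrix.inv_diagonal, Matrix.diagonal_apply_ne _ hij]

/-- A square matrix is monomial if it has exactly one nonzero entry in each row
and in each column. -/
def IsMonomial {k : Type*} [Field k] {n : ℕ} (A : Matrix (Fin n) (Fin n) k) : Prop :=
  (∀ i : Fin n, ∃! j : Fin n, A i j ≠ 0) ∧ (∀ j : Fin n, ∃! i : Fin n, A i j ≠ 0)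

namespace WeylGLAux

variable {k : Type*} [Field k] {n : ℕ}

lemma mem_diagTorus {t : GL (Fin n) k} :
    t ∈ diagTorus k n ↔ ∀ i j : Fin n, i ≠ j → (t : Matrix (Fin n) (Fin n) k) i j = 0 :=
  Iff.rfl

lemma col_ne_zero (g : GL (Fin n) k) (j : Fin n) :
    ∃ i, (g : Matrix (Fin n) (Fin n) k) i j ≠ 0 := by
  by_contra h
  push_neg at h
  have h1 : ∑ c, ((g⁻¹ : GL (Fin n) k) : Matrix (Fin n) (Fin n) k) j c *
      (g : Matrix (Fin n) (Fin n) k) c j = 1 := by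
    rw [← Matrix.mul_apply, ← Units.val_mul, inv_mul_cancel, Units.val_one,
      Matrix.one_apply_eq]
  rw [Finset.sum_eq_zero (fun c _ => by rw [h c, mul_zero])] at h1
  exact zero_ne_one h1

lemma row_ne_zero (g : GL (Fin n) k) (i : Fin n) :
    ∃ j, (g : Matrix (Fin n) (Fin n) k) i j ≠ 0 := by
  by_contra h
  push_neg at h
  have h1 : ∑ c, (g : Matrix (Fin n) (Fin n) k) i c *
      ((g⁻¹ : GL (Fin n) k) : Matrix (Fin n) (Fin n) k) c i = 1 := by
    rw [← Matrix.mul_apply, ← Units.val_mul, mul_inv_cancel, Units.val_one,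
      Matrix.one_apply_eq]
  rw [Finset.sum_eq_zero (fun c _ => by rw [h c, zero_mul])] at h1
  exact zero_ne_one h1

section Monomial

variable (A : Matrix (Fin n) (Fin n) k) (hm : IsMonomial A)

/-- For a monomial matrix, the unique row with a nonzero entry in column `j`. -/
noncomputable def mcol (j : Fin n) : Fin n := (hm.2 j).choose

/-- For a monomial matrix, the unique column with a nonzero entry in row `i`. -/
noncomputable def mrow (i : Fin n) : Fin n := (hm.1 i).choose

lemma mcol_spec (j : Fin n) : A (mcol A hm j) j ≠ 0 := (hm.2 j).choose_spec.1

lemma mcol_eq {i j : Fin n} (h : A i j ≠ 0) : i = mcol A hm j :=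
  (hm.2 j).choose_spec.2 i h

lemma mrow_spec (i : Fin n) : A i (mrow A hm i) ≠ 0 := (hm.1 i).choose_spec.1

lemma mrow_eq {i j : Fin n} (h : A i j ≠ 0) : j = mrow A hm i :=
  (hm.1 i).choose_spec.2 j h

lemma apply_eq_zero_of_ne_mcol {i j : Fin n} (h : i ≠ mcol A hm j) : A i j = 0 := by
  by_contra h'; exact h (mcol_eq A hm h')

lemma apply_eq_zero_of_ne_mrow {i j : Fin n} (h : j ≠ mrow A hm i) : A i j = 0 := by
  by_contra h'; exact h (mrow_eq A hm h')

/-- The permutation attached to a monomial matrix: `j ↦` the row of the unique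
nonzero entry in column `j`. -/
noncomputable def mperm : Equiv.Perm (Fin n) where
  toFun := mcol A hm
  invFun := mrow A hm
  left_inv := fun j => (mrow_eq A hm (mcol_spec A hm j)).symm
  right_inv := fun i => (mcol_eq A hm (mrow_spec A hm i)).symm

lemma mperm_apply (j : Fin n) : mperm A hm j = mcol A hm j := rfl

end Monomial

/-- If `u * A = A * D` with `D` diagonal and `u` having zero off-diagonal entries, then
`u i i` equals the diagonal entry `d q` whenever `A i q ≠ 0`. -/
lemma entry_cancel {A u : Matrix (Fin n) (Fin n) k}
    (hu : ∀ p q : Fin n, p ≠ q → u p q = 0) {dv : Fin n → k}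
    (hmul : u * A = A * Matrix.diagonal dv) {i q : Fin n} (hq : A i q ≠ 0) :
    u i i = dv q := by
  have h2 : (u * A) i q = (A * Matrix.diagonal dv) i q := by rw [hmul]
  rw [Matrix.mul_apply, Finset.sum_eq_single i
      (fun b _ hb => by rw [hu i b (Ne.symm hb), zero_mul])
      (fun hmem => absurd (Finset.mem_univ i) hmem), Matrix.mul_diagonal] at h2
  exact mul_right_cancel₀ hq (h2.trans (mul_comm _ _))

/-- If `A` is monomial, `B` has zero off-diagonal entries and `u * A = A * B`, then `u`
has zero off-diagonal entries. -/
lemma conj_diag_left {A B u : Matrix (Fin n) (Fin n) k} (hm : IsMonomial A)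
    (hB : ∀ p q : Fin n, p ≠ q → B p q = 0)
    (hmul : u * A = A * B) {p q : Fin n} (hpq : p ≠ q) : u p q = 0 := by
  have hqw : mcol A hm (mrow A hm q) = q := (mcol_eq A hm (mrow_spec A hm q)).symm
  have h2 : (u * A) p (mrow A hm q) = (A * B) p (mrow A hm q) := by rw [hmul]
  rw [Matrix.mul_apply, Finset.sum_eq_single q
      (fun b _ hb => by
        rw [apply_eq_zero_of_ne_mcol A hm (fun h => hb (h.trans hqw)), mul_zero])
      (fun hmem => absurd (Finset.mem_univ q) hmem)] at h2
  rw [Matrix.mul_apply, Finset.sum_eq_single (mrow A hm q)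
      (fun b _ hb => by rw [hB b (mrow A hm q) hb, mul_zero])
      (fun hmem => absurd (Finset.mem_univ _) hmem)] at h2
  rw [apply_eq_zero_of_ne_mcol A hm (fun h => hpq (h.trans hqw)), zero_mul] at h2
  exact (mul_eq_zero.mp h2).resolve_right (mrow_spec A hm q)

/-- If `A` is monomial, `u` has zero off-diagonal entries and `u * A = A * B`, then `B`
has zero off-diagonal entries. -/
lemma conj_diag_right {A B u : Matrix (Fin n) (Fin n) k} (hm : IsMonomial A)
    (hu : ∀ p q : Fin n, p ≠ q → u p q = 0)
    (hmul : u * A = A * B) {p q : Fin n} (hpq : p ≠ q) : B p q = 0 := by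
  have hrp : mrow A hm (mcol A hm p) = p := (mrow_eq A hm (mcol_spec A hm p)).symm
  have h2 : (u * A) (mcol A hm p) q = (A * B) (mcol A hm p) q := by rw [hmul]
  rw [Matrix.mul_apply, Finset.sum_eq_single (mcol A hm p)
      (fun b _ hb => by rw [hu (mcol A hm p) b (Ne.symm hb), zero_mul])
      (fun hmem => absurd (Finset.mem_univ _) hmem),
    apply_eq_zero_of_ne_mrow A hm (fun h => hpq (h.trans hrp).symm), mul_zero] at h2
  rw [Matrix.mul_apply, Finset.sum_eq_single p
      (fun b _ hb => by
        rw [apply_eq_zero_of_ne_mrow A hm (fun h => hb (h.trans hrp)), zero_mul])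
      (fun hmem => absurd (Finset.mem_univ p) hmem)] at h2
  exact (mul_eq_zero.mp h2.symm).resolve_left (mcol_spec A hm p)

/-- An invertible diagonal matrix as an element of `GL`. -/
def diagUnit (d : Fin n → kˣ) : GL (Fin n) k where
  val := Matrix.diagonal fun i => (d i : k)
  inv := Matrix.diagonal fun i => ((d i)⁻¹ : kˣ)
  val_inv := by
    rw [Matrix.diagonal_mul_diagonal]
    convert Matrix.diagonal_one using 2
    simp [← Units.val_mul]
  inv_val := by
    rw [Matrix.diagonal_mul_diagonal]
    convert Matrix.diagonal_one using 2
    simp [← Units.val_mul]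

lemma isMonomial_of_mem_normalizer (hk : ∃ a : k, a ≠ 0 ∧ a ≠ 1)
    {g : GL (Fin n) k} (hg : g ∈ Subgroup.normalizer (diagTorus k n : Set (GL (Fin n) k))) :
    IsMonomial (g : Matrix (Fin n) (Fin n) k) := by
  obtain ⟨a, ha0, ha1⟩ := hk
  have hrow : ∀ i j j' : Fin n, (g : Matrix (Fin n) (Fin n) k) i j ≠ 0 →
      (g : Matrix (Fin n) (Fin n) k) i j' ≠ 0 → j = j' := by
    intro i j j' hj hj'
    by_contra hne
    set d : Fin n → kˣ := fun c => if c = j then Units.mk0 a ha0 else 1 with hd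
    have ht : diagUnit d ∈ diagTorus k n := fun p q hpq =>
      Matrix.diagonal_apply_ne _ hpq
    have hu := mem_diagTorus.mp ((Subgroup.mem_normalizer_iff.mp hg _).mp ht)
    have hmul : ((g * diagUnit d * g⁻¹ : GL (Fin n) k) : Matrix (Fin n) (Fin n) k) *
        (g : Matrix (Fin n) (Fin n) k) =
        (g : Matrix (Fin n) (Fin n) k) * Matrix.diagonal (fun c => (d c : k)) := by
      have h1 : (g * diagUnit d * g⁻¹) * g = g * diagUnit d := by group
      have h2 := congrArg Units.val h1
      rw [Units.val_mul, Units.val_mul] at h2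
      exact h2
    have e1 : ((g * diagUnit d * g⁻¹ : GL (Fin n) k) : Matrix (Fin n) (Fin n) k) i i = a := by
      have := entry_cancel hu hmul hj
      simpa [hd] using this
    have e2 : ((g * diagUnit d * g⁻¹ : GL (Fin n) k) : Matrix (Fin n) (Fin n) k) i i = 1 := by
      have := entry_cancel hu hmul hj'
      simpa [hd, show j' ≠ j from fun h => hne h.symm] using this
    exact ha1 (e1.symm.trans e2)
  have hrowE : ∀ i : Fin n, ∃! j : Fin n, (g : Matrix (Fin n) (Fin n) k) i j ≠ 0 := by
    intro i
    obtain ⟨j, hj⟩ := row_ne_zero g i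
    exact ⟨j, hj, fun y hy => hrow i y j hy hj⟩
  have hsurj : Function.Surjective (fun i => (hrowE i).choose) := by
    intro j
    obtain ⟨i, hi⟩ := col_ne_zero g j
    exact ⟨i, ((hrowE i).choose_spec.2 j hi).symm⟩
  have hinj : Function.Injective (fun i => (hrowE i).choose) :=
    Finite.injective_iff_surjective.mpr hsurj
  have hcol : ∀ i i' j : Fin n, (g : Matrix (Fin n) (Fin n) k) i j ≠ 0 →
      (g : Matrix (Fin n) (Fin n) k) i' j ≠ 0 → i = i' := by
    intro i i' j h h'
    exact hinj (((hrowE i).choose_spec.2 j h).symm.trans ((hrowE i').choose_spec.2 j h'))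
  refine ⟨hrowE, fun j => ?_⟩
  obtain ⟨i, hi⟩ := col_ne_zero g j
  exact ⟨i, hi, fun y hy => hcol y i j hy hi⟩

lemma mem_normalizer_of_isMonomial {g : GL (Fin n) k}
    (hm : IsMonomial (g : Matrix (Fin n) (Fin n) k)) :
    g ∈ Subgroup.normalizer (diagTorus k n : Set (GL (Fin n) k)) := by
  rw [Subgroup.mem_normalizer_iff]
  intro t
  have hmul : ((g * t * g⁻¹ : GL (Fin n) k) : Matrix (Fin n) (Fin n) k) *
      (g : Matrix (Fin n) (Fin n) k) =
      (g : Matrix (Fin n) (Fin n) k) * (t : Matrix (Fin n) (Fin n) k) := by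
    rw [← Units.val_mul, ← Units.val_mul]
    congr 1
    group
  constructor
  · intro ht
    rw [mem_diagTorus]
    intro p q hpq
    exact conj_diag_left hm (mem_diagTorus.mp ht) hmul hpq
  · intro hu
    rw [mem_diagTorus]
    intro p q hpq
    exact conj_diag_right hm (mem_diagTorus.mp hu) hmul hpq

/-- The Weyl group homomorphism from the normalizer of the torus to `S_n`. -/
noncomputable def weylHom (hk : ∃ a : k, a ≠ 0 ∧ a ≠ 1) :
    Subgroup.normalizer (diagTorus k n : Set (GL (Fin n) k)) →* Equiv.Perm (Fin n) where
  toFun x := mperm ((x : GL (Fin n) k) : Matrix (Fin n) (Fin n) k)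
    (isMonomial_of_mem_normalizer hk x.2)
  map_one' := by
    refine Equiv.ext fun j => ?_
    have hm1 := isMonomial_of_mem_normalizer (k := k) (n := n) hk
      (1 : Subgroup.normalizer (diagTorus k n : Set (GL (Fin n) k))).2
    show mcol _ hm1 j = j
    refine (mcol_eq _ hm1 ?_).symm
    show (((1 : GL (Fin n) k)) : Matrix (Fin n) (Fin n) k) j j ≠ 0
    rw [Units.val_one, Matrix.one_apply_eq]
    exact one_ne_zero
  map_mul' := by
    intro x y
    refine Equiv.ext fun j => ?_
    have hx := isMonomial_of_mem_normalizer hk x.2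
    have hy := isMonomial_of_mem_normalizer hk y.2
    have hxy := isMonomial_of_mem_normalizer hk (x * y).2
    show mcol _ hxy j = mcol _ hx (mcol _ hy j)
    refine (mcol_eq _ hxy ?_).symm
    show (((x : GL (Fin n) k) : Matrix (Fin n) (Fin n) k) *
      ((y : GL (Fin n) k) : Matrix (Fin n) (Fin n) k))
        (mcol _ hx (mcol _ hy j)) j ≠ 0
    rw [Matrix.mul_apply, Finset.sum_eq_single (mcol _ hy j)
      (fun b _ hb => by rw [apply_eq_zero_of_ne_mcol _ hy hb, mul_zero])
      (fun hmem => absurd (Finset.mem_univ _) hmem)]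
    exact mul_ne_zero (mcol_spec _ hx _) (mcol_spec _ hy _)

lemma weylHom_ker (hk : ∃ a : k, a ≠ 0 ∧ a ≠ 1) :
    (weylHom (k := k) (n := n) hk).ker =
      (diagTorus k n).subgroupOf (Subgroup.normalizer (diagTorus k n : Set (GL (Fin n) k))) := by
  ext x
  rw [MonoidHom.mem_ker, Subgroup.mem_subgroupOf]
  have hx := isMonomial_of_mem_normalizer hk x.2
  constructor
  · intro h
    rw [mem_diagTorus]
    intro p q hpq
    by_contra hne
    have h1 : p = mcol _ hx q := mcol_eq _ hx hne
    have h2 : mcol _ hx q = q := by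
      have h3 := Equiv.ext_iff.mp h q
      simpa [weylHom, mperm_apply] using h3
    exact hpq (h1.trans h2)
  · intro h
    refine Equiv.ext fun q => ?_
    show mcol _ hx q = q
    refine (mcol_eq _ hx ?_).symm
    obtain ⟨i, hi⟩ := col_ne_zero (x : GL (Fin n) k) q
    have hiq : i = q := by
      by_contra hne
      exact hi (mem_diagTorus.mp h i q hne)
    rwa [hiq] at hi

/-- Permutation matrix as an element of `GL`. -/
def permGL (σ : Equiv.Perm (Fin n)) : GL (Fin n) k where
  val := Matrix.of fun i j => if i = σ j then 1 else 0
  inv := Matrix.of fun i j => if j = σ i then 1 else 0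
  val_inv := by
    ext i j
    rw [Matrix.mul_apply, Finset.sum_eq_single (σ.symm i)
      (fun b _ hb => by
        rw [Matrix.of_apply, if_neg
          (fun h => hb (by rw [h, Equiv.symm_apply_apply])), zero_mul])
      (fun hmem => absurd (Finset.mem_univ _) hmem)]
    by_cases h : i = j
    · subst h; simp
    · have h' : ¬ j = i := fun hh => h hh.symm
      simp [Matrix.one_apply_ne h, h']
  inv_val := by
    ext i j
    rw [Matrix.mul_apply, Finset.sum_eq_single (σ i)
      (fun b _ hb => by rw [Matrix.of_apply, if_neg hb, zero_mul])
      (fun hmem => absurd (Finset.mem_univ _) hmem)]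
    by_cases h : i = j
    · subst h; simp
    · have h' : ¬ σ i = σ j := fun hh => h (σ.injective hh)
      simp [Matrix.one_apply_ne h, h']

lemma permGL_isMonomial (σ : Equiv.Perm (Fin n)) :
    IsMonomial ((permGL (k := k) σ : GL (Fin n) k) : Matrix (Fin n) (Fin n) k) := by
  constructor
  · intro i
    refine ⟨σ.symm i, ?_, fun y hy => ?_⟩
    · show (if i = σ (σ.symm i) then (1 : k) else 0) ≠ 0
      rw [if_pos (σ.apply_symm_apply i).symm]
      exact one_ne_zero
    · have h : i = σ y := by
        by_contra h
        exact hy (if_neg h)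
      rw [h, Equiv.symm_apply_apply]
  · intro j
    refine ⟨σ j, ?_, fun y hy => ?_⟩
    · show (if σ j = σ j then (1 : k) else 0) ≠ 0
      rw [if_pos rfl]
      exact one_ne_zero
    · by_contra h
      exact hy (if_neg h)

lemma weylHom_surjective (hk : ∃ a : k, a ≠ 0 ∧ a ≠ 1) :
    Function.Surjective (weylHom (k := k) (n := n) hk) := by
  intro σ
  refine ⟨⟨permGL σ, mem_normalizer_of_isMonomial (permGL_isMonomial σ)⟩, ?_⟩
  refine Equiv.ext fun j => ?_
  have hm := isMonomial_of_mem_normalizer hk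
    (mem_normalizer_of_isMonomial (permGL_isMonomial (k := k) σ))
  show mcol _ hm j = σ j
  refine (mcol_eq _ hm ?_).symm
  show (if σ j = σ j then (1 : k) else 0) ≠ 0
  rw [if_pos rfl]
  exact one_ne_zero

end WeylGLAux

/-- Identification of the Weyl group of `GL_n`: if `|k| > 2` then the normalizer `N` of
the diagonal torus `T ≤ GL_n(k)` consists exactly of the invertible monomial matrices,
and `N/T` is isomorphic to the symmetric group `S_n`. -/
theorem weyl_group_of_GL {k : Type*} [Field k] {n : ℕ} (hn : 1 ≤ n)
    (hk : ∃ a : k, a ≠ 0 ∧ a ≠ 1) :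
    (∀ g : GL (Fin n) k,
      g ∈ Subgroup.normalizer (diagTorus k n : Set (GL (Fin n) k)) ↔ IsMonomial (g : Matrix (Fin n) (Fin n) k)) ∧
    Nonempty
      (Subgroup.normalizer (diagTorus k n : Set (GL (Fin n) k)) ⧸
          (diagTorus k n).subgroupOf (Subgroup.normalizer (diagTorus k n : Set (GL (Fin n) k))) ≃*
        Equiv.Perm (Fin n)) := by
  refine ⟨fun g => ⟨fun h => WeylGLAux.isMonomial_of_mem_normalizer hk h,
    fun h => WeylGLAux.mem_normalizer_of_isMonomial h⟩, ⟨?_⟩⟩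
  exact (QuotientGroup.quotientMulEquivOfEq (WeylGLAux.weylHom_ker hk).symm).trans
    (QuotientGroup.quotientKerEquivOfSurjective _ (WeylGLAux.weylHom_surjective hk))
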